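/- arXiv:2206.09292 — 2 statements merged into one kernel-verified Lean document; each statement's English description precedes it below -/
import Mathlib

section
/- Define the initial cylinders of the Lozi map by O_i = ⋂_{m=1}^{n} f^{-(m-1)}(M_{i_m}) for a word i ∈ {+,−}ⁿ, where M₊ = {x > 0} × ℝ and M₋ = {x < 0} × ℝ intersected with the interior of a convex invariant set M. Then every initial cylinder is convex. -/
/-- The affine map agreeing with the Lozi map on a fixed sign region. -/
noncomputable def loziAff (s b : ℝ) : (ℝ × ℝ) →ᵃ[ℝ] (ℝ × ℝ) where
  toFun := fun p => (1 + p.2 + s * p.1, b * p.1)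
  linear :=
    { toFun := fun p => (p.2 + s * p.1, b * p.1)
      map_add' := by intro p q; simp [Prod.ext_iff]; constructor <;> ring
      map_smul' := by intro c p; simp [Prod.ext_iff]; constructor <;> ring }
  map_vadd' := by
    intro p v
    simp [Prod.ext_iff]
    constructor <;> ring

theorem lozi_initial_cylinders_convex (a b : ℝ) (hb : b ≠ 0)
    (f : ℝ × ℝ → ℝ × ℝ) (hf : ∀ x y, f (x, y) = (1 + y - a * |x|, b * x))
    (M : Set (ℝ × ℝ)) (hM : Convex ℝ M) (hinv : f '' M ⊆ M)
    (Mplus Mminus : Set (ℝ × ℝ))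
    (hMp : Mplus = {p : ℝ × ℝ | 0 < p.1} ∩ interior M)
    (hMm : Mminus = {p : ℝ × ℝ | p.1 < 0} ∩ interior M)
    (n : ℕ) (i : Fin n → Bool) :
    Convex ℝ (⋂ m : Fin n, (f^[(m : ℕ)]) ⁻¹' (if i m then Mplus else Mminus)) := by
  have hfst : IsLinearMap ℝ (fun p : ℝ × ℝ => p.1) := ⟨fun p q => rfl, fun c p => rfl⟩
  have hconvT : ∀ c : Bool, Convex ℝ (if c then Mplus else Mminus) := by
    intro c
    cases c <;> simp [hMp, hMm]
    · exact (convex_halfSpace_lt hfst 0).inter hM.interior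
    · exact (convex_halfSpace_gt hfst 0).inter hM.interior
  induction n with
  | zero => simpa using convex_univ
  | succ n ih =>
    set C' : Set (ℝ × ℝ) :=
      ⋂ m : Fin n, (f^[(m : ℕ)]) ⁻¹' (if i m.succ then Mplus else Mminus) with hC'
    have hC'conv : Convex ℝ C' := ih (fun m => i m.succ)
    set s : ℝ := if i 0 then -a else a with hs
    have hset : (⋂ m : Fin (n + 1), (f^[(m : ℕ)]) ⁻¹' (if i m then Mplus else Mminus))
        = (if i 0 then Mplus else Mminus) ∩ (loziAff s b) ⁻¹' C' := by
      ext p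
      have hagree : p ∈ (if i 0 then Mplus else Mminus) → f p = loziAff s b p := by
        intro hp
        have hfp : f p = (1 + p.2 - a * |p.1|, b * p.1) := by
          rw [← hf p.1 p.2]
        by_cases h0 : i 0
        · rw [h0] at hs; simp only [h0, if_true, hMp] at hp
          have : |p.1| = p.1 := abs_of_pos hp.1
          simp [loziAff, hfp, this, hs]
          try ring
        · rw [if_neg h0] at hs; simp only [h0, if_false, hMm] at hp
          have : |p.1| = -p.1 := abs_of_neg hp.1
          simp [loziAff, hfp, this, hs]
          try ring
      simp only [Set.mem_iInter, Set.mem_inter_iff, Set.mem_preimage,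
        Fin.forall_fin_succ, Fin.val_zero, Function.iterate_zero, id_eq, Fin.val_succ,
        Function.iterate_succ_apply, hC']
      constructor
      · rintro ⟨h0, hrest⟩
        refine ⟨h0, ?_⟩
        intro m; rw [← hagree h0] at *; exact hrest m
      · rintro ⟨h0, hrest⟩
        refine ⟨h0, ?_⟩
        intro m; rw [hagree h0]; exact hrest m
    rw [hset]
    exact (hconvT (i 0)).inter (hC'conv.affine_preimage _)
end

section
/- For the Lozi map with a > 1 + b and b > 0, vectors in the unstable cone are uniformly expanded: there exist c > 0 small and λ > 1 such that for all v = (ξ,η) with ξ ≥ c|η|, ‖Df_± v‖ ≥ λ‖v‖, where Df_± = [[∓a,1],[b,0]]. -/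
theorem lozi_unstable_cone_uniform_expansion
    (a b : ℝ) (hb : 0 < b) (ha : 1 + b < a) :
    ∃ c : ℝ, 0 < c ∧ ∃ lam : ℝ, 1 < lam ∧
      ∀ ξ η : ℝ, c * |η| ≤ ξ →
        lam * Real.sqrt (ξ ^ 2 + η ^ 2) ≤ Real.sqrt ((-a * ξ + η) ^ 2 + (b * ξ) ^ 2) ∧
        lam * Real.sqrt (ξ ^ 2 + η ^ 2) ≤ Real.sqrt ((a * ξ + η) ^ 2 + (b * ξ) ^ 2) := by
  have ha1 : (1 : ℝ) < a := by linarith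
  have ha0 : (0 : ℝ) < a - 1 := by linarith
  obtain ⟨N, hNdef⟩ : ∃ N : ℝ, N = ((a + 1) / 2) ^ 2 + b ^ 2 := ⟨_, rfl⟩
  obtain ⟨D, hDdef⟩ : ∃ D : ℝ, D = 1 + ((a - 1) / 2) ^ 2 := ⟨_, rfl⟩
  have hD : (0 : ℝ) < D := by rw [hDdef]; positivity
  have hN : (0 : ℝ) < N := by rw [hNdef]; positivity
  have hDN : D < N := by
    rw [hNdef, hDdef]
    nlinarith [sq_nonneg b]
  refine ⟨2 / (a - 1), by positivity, Real.sqrt (N / D), ?_, ?_⟩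
  · rw [show (1 : ℝ) = Real.sqrt 1 by simp]
    apply Real.sqrt_lt_sqrt (by norm_num)
    rw [lt_div_iff₀ hD]; linarith
  · intro ξ η hcone
    have hξ : 0 ≤ ξ := le_trans (by positivity) hcone
    have hη : 2 * |η| ≤ (a - 1) * ξ := by
      have h1 := mul_le_mul_of_nonneg_left hcone ha0.le
      have h2 : (a - 1) * (2 / (a - 1) * |η|) = 2 * |η| := by
        field_simp
      linarith [h2 ▸ h1]
    have habs := abs_nonneg η
    have hsq : |η| ^ 2 = η ^ 2 := sq_abs η
    have hle := le_abs_self η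
    have hnle := neg_abs_le η
    -- step 1 : ξ²+η² ≤ D ξ²
    have step1 : ξ ^ 2 + η ^ 2 ≤ D * ξ ^ 2 := by
      rw [hDdef]
      nlinarith [sq_nonneg ξ]
    -- factors for step 2
    have hf1 : 0 ≤ (a - 1) / 2 * ξ - |η| := by linarith
    have hf2 : 0 ≤ a * ξ - |η| + (a + 1) / 2 * ξ := by nlinarith
    have hprod := mul_nonneg hf1 hf2
    have hauxm : 0 ≤ a * ξ * (|η| - η) :=
      mul_nonneg (mul_nonneg (by linarith : (0:ℝ) ≤ a) hξ) (by linarith)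
    have hauxp : 0 ≤ a * ξ * (η + |η|) :=
      mul_nonneg (mul_nonneg (by linarith : (0:ℝ) ≤ a) hξ) (by linarith)
    have step2m : N * ξ ^ 2 ≤ (-a * ξ + η) ^ 2 + (b * ξ) ^ 2 := by
      rw [hNdef]
      nlinarith [hprod, hauxm, hsq]
    have step2p : N * ξ ^ 2 ≤ (a * ξ + η) ^ 2 + (b * ξ) ^ 2 := by
      rw [hNdef]
      nlinarith [hprod, hauxp, hsq]
    have key : ∀ t : ℝ, N * ξ ^ 2 ≤ t →
        Real.sqrt (N / D) * Real.sqrt (ξ ^ 2 + η ^ 2) ≤ Real.sqrt t := by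
      intro t ht
      have hND0 : 0 ≤ N / D := by positivity
      rw [← Real.sqrt_mul hND0]
      apply Real.sqrt_le_sqrt
      rw [div_mul_eq_mul_div, div_le_iff₀ hD]
      calc N * (ξ ^ 2 + η ^ 2) ≤ N * (D * ξ ^ 2) :=
            mul_le_mul_of_nonneg_left step1 hN.le
        _ = (N * ξ ^ 2) * D := by ring
        _ ≤ t * D := mul_le_mul_of_nonneg_right ht hD.le
    exact ⟨key _ step2m, key _ step2p⟩
end
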